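/- Let F be a nonarchimedean local field with integers 𝔬, maximal ideal 𝔭 = (ϖ), residue cardinality q. Let 𝔄_min ⊂ M_N(𝔬) be the standard Iwahori order (matrices that are upper triangular modulo 𝔭) and 𝔓_min its Jacobson radical (matrices strictly upper triangular modulo 𝔭). Then for every k ∈ ℤ, the set of determinants {det(γ) : γ ∈ 𝔓_min^k} equals 𝔭^k = ϖ^k𝔬. -/

import Mathlib

section Aux

variable {F : Type*} [Field F] (vF : F → ℤ)

theorem aux_v1 (hvFmul : ∀ x y : F, x ≠ 0 → y ≠ 0 → vF (x * y) = vF x + vF y) :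
    vF 1 = 0 := by
  have h := hvFmul 1 1 one_ne_zero one_ne_zero
  rw [one_mul] at h; omega

theorem aux_vneg1 (hvFmul : ∀ x y : F, x ≠ 0 → y ≠ 0 → vF (x * y) = vF x + vF y) :
    vF (-1) = 0 := by
  have h := hvFmul (-1) (-1) (by simp) (by simp)
  rw [neg_mul_neg, one_mul, aux_v1 vF hvFmul] at h; omega

theorem aux_vinv (hvFmul : ∀ x y : F, x ≠ 0 → y ≠ 0 → vF (x * y) = vF x + vF y)
    {x : F} (hx : x ≠ 0) : vF x⁻¹ = - vF x := by
  have h := hvFmul x x⁻¹ hx (inv_ne_zero hx)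
  rw [mul_inv_cancel₀ hx, aux_v1 vF hvFmul] at h; omega

theorem aux_vprod (hvFmul : ∀ x y : F, x ≠ 0 → y ≠ 0 → vF (x * y) = vF x + vF y)
    {ι : Type*} (s : Finset ι) (f : ι → F) (hf : ∀ i ∈ s, f i ≠ 0) :
    vF (∏ i ∈ s, f i) = ∑ i ∈ s, vF (f i) := by
  induction s using Finset.cons_induction with
  | empty => simpa using aux_v1 vF hvFmul
  | cons a s ha ih =>
    rw [Finset.prod_cons, Finset.sum_cons,
      hvFmul _ _ (hf a (Finset.mem_cons_self a s))
        (Finset.prod_ne_zero_iff.mpr fun i hi => hf i (Finset.mem_cons_of_mem hi)),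
      ih fun i hi => hf i (Finset.mem_cons_of_mem hi)]

theorem aux_vsum
    (hvFadd : ∀ x y : F, x ≠ 0 → y ≠ 0 → x + y ≠ 0 → min (vF x) (vF y) ≤ vF (x + y))
    {ι : Type*} (c : ℤ) (s : Finset ι) (f : ι → F)
    (hf : ∀ i ∈ s, f i = 0 ∨ c ≤ vF (f i)) :
    (∑ i ∈ s, f i) = 0 ∨ c ≤ vF (∑ i ∈ s, f i) := by
  induction s using Finset.cons_induction with
  | empty => simp
  | cons a s ha ih =>
    rw [Finset.sum_cons]
    rcases hf a (Finset.mem_cons_self a s) with h0 | hva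
    · rw [h0, zero_add]
      exact ih fun i hi => hf i (Finset.mem_cons_of_mem hi)
    rcases ih (fun i hi => hf i (Finset.mem_cons_of_mem hi)) with h0 | hvs
    · rw [h0, add_zero]; exact Or.inr hva
    by_cases hne : f a + ∑ i ∈ s, f i = 0
    · exact Or.inl hne
    by_cases hfa : f a = 0
    · rw [hfa, zero_add]; exact Or.inr hvs
    by_cases hfs : (∑ i ∈ s, f i) = 0
    · rw [hfs, add_zero]; exact Or.inr hva
    right
    have := hvFadd _ _ hfa hfs hne
    omega

end Aux

/-- Let `F` be a nonarchimedean local field with normalized valuation `vF`,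
ring of integers `𝔬` and maximal ideal `𝔭`.  Let `𝔄_min ⊆ M_N(𝔬)` be the standard Iwahori
order and `𝔓_min` its Jacobson radical; the `k`-th power of the fractional ideal `𝔓_min` is
explicitly `𝔓_min^k = {(x_{ij}) : vF (x_{ij}) ≥ ⌈(k + i - j)/N⌉}`, i.e. (since `vF` is
integer-valued) `{(x_{ij}) : k + i - j ≤ N · vF (x_{ij})}`.  Then for every `k ∈ ℤ`,
`{det γ : γ ∈ 𝔓_min^k} = 𝔭^k = {x : x = 0 ∨ vF x ≥ k}`. -/
theorem statement15
    (F : Type*) [Field F]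
    (vF : F → ℤ)
    (hvFmul : ∀ x y : F, x ≠ 0 → y ≠ 0 → vF (x * y) = vF x + vF y)
    (hvFadd : ∀ x y : F, x ≠ 0 → y ≠ 0 → x + y ≠ 0 → min (vF x) (vF y) ≤ vF (x + y))
    (hvFsurj : ∀ m : ℤ, ∃ x : F, x ≠ 0 ∧ vF x = m)
    (N : ℕ) (hN : 0 < N) (k : ℤ) :
    (fun γ : Matrix (Fin N) (Fin N) F => γ.det) ''
        {γ : Matrix (Fin N) (Fin N) F |
          ∀ i j : Fin N, γ i j = 0 ∨ k + (i : ℤ) - (j : ℤ) ≤ (N : ℤ) * vF (γ i j)}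
      = {x : F | x = 0 ∨ k ≤ vF x} := by
  haveI : NeZero N := ⟨hN.ne'⟩
  have hNquot : ((N : ℤ)) ≠ 0 := by exact_mod_cast hN.ne'
  ext x
  simp only [Set.mem_image, Set.mem_setOf_eq]
  constructor
  · rintro ⟨γ, hγ, rfl⟩
    rw [Matrix.det_apply']
    apply aux_vsum vF hvFadd
    intro σ _
    by_cases hz : ∀ i, γ (σ i) i ≠ 0
    swap
    · push_neg at hz
      obtain ⟨i, hi⟩ := hz
      left
      exact mul_eq_zero_of_right _ (Finset.prod_eq_zero (Finset.mem_univ i) hi)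
    right
    have hprodne : (∏ i, γ (σ i) i) ≠ 0 :=
      Finset.prod_ne_zero_iff.mpr fun i _ => hz i
    have hε : ((Equiv.Perm.sign σ : ℤ) : F) = 1 ∨ ((Equiv.Perm.sign σ : ℤ) : F) = -1 := by
      rcases Int.units_eq_one_or (Equiv.Perm.sign σ) with h | h <;> simp [h]
    have hεne : ((Equiv.Perm.sign σ : ℤ) : F) ≠ 0 := by
      rcases hε with h | h <;> rw [h] <;> simp
    have hε0 : vF ((Equiv.Perm.sign σ : ℤ) : F) = 0 := by
      rcases hε with h | h <;> rw [h]
      · exact aux_v1 vF hvFmul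
      · exact aux_vneg1 vF hvFmul
    rw [hvFmul _ _ hεne hprodne, hε0, zero_add,
      aux_vprod vF hvFmul _ _ fun i _ => hz i]
    have key : ∀ i : Fin N, k + ((σ i : Fin N) : ℤ) - (i : ℤ) ≤ (N : ℤ) * vF (γ (σ i) i) :=
      fun i => (hγ (σ i) i).resolve_left (hz i)
    have hsum : (N : ℤ) * k ≤ (N : ℤ) * ∑ i, vF (γ (σ i) i) := by
      have h1 : ∑ i : Fin N, (k + ((σ i : Fin N) : ℤ) - (i : ℤ)) ≤
          ∑ i : Fin N, (N : ℤ) * vF (γ (σ i) i) := Finset.sum_le_sum fun i _ => key i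
      have h2 : ∑ i : Fin N, ((σ i : Fin N) : ℤ) = ∑ i : Fin N, (i : ℤ) :=
        Equiv.sum_comp σ (fun j : Fin N => (j : ℤ))
      rw [Finset.mul_sum]
      calc (N : ℤ) * k = ∑ i : Fin N, (k + ((σ i : Fin N) : ℤ) - (i : ℤ)) := by
            simp only [Finset.sum_sub_distrib, Finset.sum_add_distrib, h2,
              Finset.sum_const, Finset.card_univ, Fintype.card_fin, nsmul_eq_mul]
            ring
        _ ≤ _ := h1
    exact le_of_mul_le_mul_left hsum (by exact_mod_cast hN)
  · intro hx
    by_cases hx0 : x = 0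
    · refine ⟨0, fun i j => Or.inl rfl, ?_⟩
      simp [hx0, Matrix.det_zero]
    have hxk : k ≤ vF x := hx.resolve_left hx0
    -- the cyclic shift by k mod N
    have hcmod : (0 : ℤ) ≤ k % N ∧ k % N < N := by
      constructor
      · exact Int.emod_nonneg k hNquot
      · exact Int.emod_lt_of_pos k (by exact_mod_cast hN)
    set c : Fin N := ⟨(k % N).toNat, by
      rw [← Nat.cast_lt (α := ℤ), Int.toNat_of_nonneg hcmod.1]; exact hcmod.2⟩ with hc
    have hcval : ((c : ℕ) : ℤ) = k % N := Int.toNat_of_nonneg hcmod.1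
    set σ : Equiv.Perm (Fin N) := Equiv.addRight c with hσdef
    have hσ : ∀ i : Fin N, σ i = i + c := fun i => rfl
    have hdvd : ∀ i : Fin N, ((N : ℤ)) ∣ (k + (i : ℤ) - ((σ i : Fin N) : ℤ)) := by
      intro i
      obtain ⟨q1, hq1⟩ : ∃ q : ℕ, (i : ℕ) + (c : ℕ) = N * q + ((i : ℕ) + (c : ℕ)) % N :=
        ⟨((i : ℕ) + (c : ℕ)) / N, (Nat.div_add_mod _ N).symm⟩
      obtain ⟨q2, hq2⟩ : ∃ q : ℤ, k = (N : ℤ) * q + k % N :=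
        ⟨k / N, (Int.mul_ediv_add_emod k N).symm⟩
      have hσv : ((σ i : Fin N) : ℕ) = ((i : ℕ) + (c : ℕ)) % N := by
        rw [hσ i, Fin.val_add]
      refine ⟨q2 + (q1 : ℤ), ?_⟩
      rw [← hσv] at hq1
      have hq1' : ((i : ℕ) : ℤ) + ((c : ℕ) : ℤ) = (N : ℤ) * (q1 : ℤ) + ((σ i : Fin N) : ℤ) := by
        exact_mod_cast hq1
      rw [mul_add]
      rw [hcval] at hq1'
      linarith [hq1', hq2]
    set t : Fin N → ℤ := fun i => (k + (i : ℤ) - ((σ i : Fin N) : ℤ)) / N with ht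
    have hNt : ∀ i : Fin N, (N : ℤ) * t i = k + (i : ℤ) - ((σ i : Fin N) : ℤ) :=
      fun i => Int.mul_ediv_cancel' (hdvd i)
    have hsumt : ∑ i, t i = k := by
      have h2 : ∑ i : Fin N, ((σ i : Fin N) : ℤ) = ∑ i : Fin N, (i : ℤ) :=
        Equiv.sum_comp σ (fun j : Fin N => (j : ℤ))
      have : (N : ℤ) * ∑ i, t i = (N : ℤ) * k := by
        rw [Finset.mul_sum]
        simp only [hNt]
        simp only [Finset.sum_sub_distrib, Finset.sum_add_distrib, h2,
          Finset.sum_const, Finset.card_univ, Fintype.card_fin, nsmul_eq_mul]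
        ring
      exact mul_left_cancel₀ hNquot this
    choose u hu0 hu1 using fun i : Fin N => hvFsurj (t i)
    set i0 : Fin N := ⟨0, hN⟩ with hi0
    set P : F := ∏ i ∈ Finset.univ.erase i0, u i with hP
    have hPne : P ≠ 0 := Finset.prod_ne_zero_iff.mpr fun i _ => hu0 i
    set ε : F := ((Equiv.Perm.sign σ : ℤ) : F) with hεdef
    have hε : ε = 1 ∨ ε = -1 := by
      rcases Int.units_eq_one_or (Equiv.Perm.sign σ) with h | h <;> rw [hεdef, h] <;> simp
    have hεne : ε ≠ 0 := by rcases hε with h | h <;> rw [h] <;> simp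
    have hε0 : vF ε = 0 := by
      rcases hε with h | h <;> rw [h]
      · exact aux_v1 vF hvFmul
      · exact aux_vneg1 vF hvFmul
    have hεsq : ε * ε = 1 := by rcases hε with h | h <;> rw [h] <;> ring
    set b : Fin N → F := Function.update u i0 (ε * x * P⁻¹) with hb
    have hbne : ∀ i, b i ≠ 0 := by
      intro i
      by_cases hii : i = i0
      · rw [hb, hii, Function.update_self]
        exact mul_ne_zero (mul_ne_zero hεne hx0) (inv_ne_zero hPne)
      · rw [hb, Function.update_of_ne hii]; exact hu0 i
    have hberase : ∀ i ∈ Finset.univ.erase i0, b i = u i := by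
      intro i hi
      rw [hb, Function.update_of_ne (Finset.ne_of_mem_erase hi)]
    have hbval : ∀ i, t i ≤ vF (b i) := by
      intro i
      by_cases hii : i = i0
      · subst hii
        rw [hb, Function.update_self]
        have hvP : vF P = ∑ i ∈ Finset.univ.erase i0, t i := by
          rw [hP, aux_vprod vF hvFmul _ _ fun i _ => hu0 i]
          exact Finset.sum_congr rfl fun i _ => hu1 i
        have hsplit : ∑ i ∈ Finset.univ.erase i0, t i = k - t i0 := by
          rw [Finset.sum_erase_eq_sub (Finset.mem_univ i0), hsumt]
        rw [hvFmul _ _ (mul_ne_zero hεne hx0) (inv_ne_zero hPne),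
          hvFmul _ _ hεne hx0, aux_vinv vF hvFmul hPne, hε0, hvP, hsplit]
        omega
      · rw [hb, Function.update_of_ne hii, hu1 i]
    refine ⟨Matrix.diagonal b * σ.permMatrix F, ?_, ?_⟩
    · intro i j
      have hentry : (Matrix.diagonal b * σ.permMatrix F) i j
          = b i * (if σ i = j then 1 else 0) := by
        rw [Matrix.diagonal_mul]
        congr 1
        simp [Equiv.Perm.permMatrix, PEquiv.toMatrix_apply, Equiv.toPEquiv_apply, eq_comm]
      rw [hentry]
      by_cases hij : σ i = j
      · right
        rw [if_pos hij, mul_one, ← hij]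
        calc k + (i : ℤ) - ((σ i : Fin N) : ℤ) = (N : ℤ) * t i := (hNt i).symm
          _ ≤ (N : ℤ) * vF (b i) := by
              apply mul_le_mul_of_nonneg_left (hbval i) (by positivity)
      · left; rw [if_neg hij, mul_zero]
    · show (Matrix.diagonal b * σ.permMatrix F).det = x
      rw [Matrix.det_mul, Matrix.det_diagonal, Matrix.det_permutation, ← hεdef]
      have hprodb : ∏ i, b i = ε * x * P⁻¹ * P := by
        rw [← Finset.mul_prod_erase Finset.univ b (Finset.mem_univ i0),
          Finset.prod_congr rfl hberase, ← hP, hb, Function.update_self]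
      rw [hprodb]
      have hPP : ε * x * P⁻¹ * P = ε * x := by
        field_simp
      rw [hPP]
      calc ε * x * ε = x * (ε * ε) := by ring
        _ = x := by rw [hεsq, mul_one]
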